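/- Let A be a Novikov algebra and H a nonzero commutative two-sided ideal of A with H² = H. Then H is contained in the nucleus N(A) of A. -/

import Mathlib

/-- The associator `(a,b,c) = (ab)c - a(bc)`. -/
def asc {A : Type*} [NonUnitalNonAssocRing A] (a b c : A) : A := a * b * c - a * (b * c)

/-- Membership in the nucleus `N(A)`. -/
def inNuc {A : Type*} [NonUnitalNonAssocRing A] (n : A) : Prop :=
  ∀ a b : A, asc n a b = 0 ∧ asc a n b = 0 ∧ asc a b n = 0

/-- Lemma 8: if `H` is a nonzero commutative two-sided ideal of a Novikov algebra `A`
with `H² = H`, then `H ⊆ N(A)`. -/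
theorem novikov_comm_ideal_subset_nucleus {A : Type*} [NonUnitalNonAssocRing A]
    (hsym : ∀ a b c : A, asc a b c = asc b a c)
    (hrc : ∀ a b c : A, a * b * c = a * c * b)
    (H : AddSubgroup A) (hne : H ≠ ⊥)
    (hH : ∀ h ∈ H, ∀ a : A, a * h ∈ H ∧ h * a ∈ H)
    (hcomm : ∀ x ∈ H, ∀ y ∈ H, x * y = y * x)
    (hsq : AddSubgroup.closure {x : A | ∃ u ∈ H, ∃ v ∈ H, x = u * v} = H) :
    ∀ h ∈ H, inNuc h := by
  have ls : ∀ a b c : A, a * b * c - a * (b * c) = b * a * c - b * (a * c) := by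
    intro a b c
    simpa [asc] using hsym a b c
  -- L1 : u(vc) = v(uc) for u v ∈ H
  have l1 : ∀ u ∈ H, ∀ v ∈ H, ∀ c : A, u * (v * c) = v * (u * c) := by
    intro u hu v hv c
    have h1 := ls u v c
    rw [hcomm u hu v hv] at h1
    exact (sub_right_inj.mp h1)
  -- L2 : (uv)c = u(vc) for u v ∈ H
  have l2 : ∀ u ∈ H, ∀ v ∈ H, ∀ c : A, u * v * c = u * (v * c) := by
    intro u hu v hv c
    rw [hrc u v c, hcomm (u * c) (hH u hu c).2 v hv, l1 v hv u hu c]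
  -- Main step 1 : ((uv)a)b = (uv)(ab) for u v ∈ H
  have key1 : ∀ u ∈ H, ∀ v ∈ H, ∀ a b : A, u * v * a * b = u * v * (a * b) := by
    intro u hu v hv a b
    have mua : u * a ∈ H := (hH u hu a).2
    have mau : a * u ∈ H := (hH u hu a).1
    have mvb : v * b ∈ H := (hH v hv b).2
    have mav : a * v ∈ H := (hH v hv a).1
    have r6 : u * a * (v * b) = u * v * a * b := by
      rw [hcomm (u * a) mua (v * b) mvb, hrc v b (u * a), l1 v hv u hu a,
        ← l2 u hu v hv a]
    have r4 : u * (a * (v * b)) = a * u * (v * b) := by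
      have m1 : a * (v * b) ∈ H := (hH (v * b) mvb a).1
      rw [hcomm u hu (a * (v * b)) m1, hrc a (v * b) u]
    have r5 : a * (u * v * b) = a * u * (v * b) + a * u * (v * b) - u * v * a * b := by
      have h1 := ls a u (v * b)
      rw [r4, r6] at h1
      rw [l2 u hu v hv b]
      have h2 := sub_eq_sub_iff_add_eq_add.mp h1
      exact eq_sub_of_add_eq' h2.symm
    have r1 : u * v * a * b + a * (u * v) * b = a * u * (v * b) + a * u * (v * b) := by
      have h1 := ls u a v
      have h2 : u * (a * v) = a * u * v := by
        rw [hcomm u hu (a * v) mav, hrc a v u]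
      rw [h2] at h1
      have h3 : u * a * v + a * (u * v) = a * u * v + a * u * v :=
        sub_eq_sub_iff_add_eq_add.mp h1
      have h4 := congrArg (fun z => z * b) h3
      simp only [add_mul] at h4
      rw [hrc u a v] at h4
      rw [l2 (a * u) mau v hv b] at h4
      exact h4
    have r2 : a * (u * v) * b - a * (u * v * b) = u * v * a * b - u * v * (a * b) :=
      ls a (u * v) b
    have hP : a * (u * v) * b = a * u * (v * b) + a * u * (v * b) - u * v * a * b :=
      eq_sub_of_add_eq' r1
    have h0 : u * v * a * b - u * v * (a * b) = 0 := by
      rw [← r2, hP, r5]; abel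
    exact sub_eq_zero.mp h0
  -- Fact A : h ∈ H is "left nuclear": (ha)b = h(ab)
  have factA : ∀ h ∈ H, ∀ a b : A, h * a * b = h * (a * b) := by
    have lift : ∀ h ∈ AddSubgroup.closure {x : A | ∃ u ∈ H, ∃ v ∈ H, x = u * v},
        ∀ a b : A, h * a * b = h * (a * b) := by
      intro h hh
      induction hh using AddSubgroup.closure_induction with
      | mem x hx =>
        obtain ⟨u, hu, v, hv, rfl⟩ := hx
        exact key1 u hu v hv
      | zero => intro a b; simp
      | add x y hx hy ihx ihy => intro a b; simp only [add_mul, mul_add] at *;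
                                 rw [ihx a b, ihy a b]
      | neg x hx ihx => intro a b; simp only [neg_mul, mul_neg] at *; rw [ihx a b]
    intro h hh
    exact lift h (by rw [hsq]; exact hh)
  -- Fact A' : middle slot
  have factA2 : ∀ h ∈ H, ∀ a b : A, a * h * b = a * (h * b) := by
    intro h hh a b
    have h1 := ls a h b
    rw [factA h hh a b, sub_self] at h1
    exact sub_eq_zero.mp h1
  -- Main step 2 : (ab)(uv) = a(b(uv)) for u v ∈ H
  have key2 : ∀ u ∈ H, ∀ v ∈ H, ∀ a b : A, a * b * (u * v) = a * (b * (u * v)) := by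
    intro u hu v hv a b
    have mau : a * u ∈ H := (hH u hu a).1
    have mbu : b * u ∈ H := (hH u hu b).1
    have mav : a * v ∈ H := (hH v hv a).1
    rw [hrc a b (u * v), ← factA2 u hu a v, hrc (a * u) v b, factA (a * u) mau b v]
    rw [← factA2 u hu b v, ← factA2 (b * u) mbu a v, hrc a (b * u) v,
      ← factA (a * v) mav b u, hrc a v b, hrc (a * b) v u, hrc a b u,
      factA (a * u) mau b v]
  -- Fact C : third slot
  have factC : ∀ h ∈ H, ∀ a b : A, a * b * h = a * (b * h) := by
    have lift : ∀ h ∈ AddSubgroup.closure {x : A | ∃ u ∈ H, ∃ v ∈ H, x = u * v},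
        ∀ a b : A, a * b * h = a * (b * h) := by
      intro h hh
      induction hh using AddSubgroup.closure_induction with
      | mem x hx =>
        obtain ⟨u, hu, v, hv, rfl⟩ := hx
        exact key2 u hu v hv
      | zero => intro a b; simp
      | add x y hx hy ihx ihy => intro a b; simp only [mul_add] at *;
                                 rw [ihx a b, ihy a b]
      | neg x hx ihx => intro a b; simp only [mul_neg] at *; rw [ihx a b]
    intro h hh
    exact lift h (by rw [hsq]; exact hh)
  intro h hh a b
  refine ⟨?_, ?_, ?_⟩
  · show h * a * b - h * (a * b) = 0
    rw [factA h hh a b, sub_self]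
  · show a * h * b - a * (h * b) = 0
    rw [factA2 h hh a b, sub_self]
  · show a * b * h - a * (b * h) = 0
    rw [factC h hh a b, sub_self]
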